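/- Let q : ℂ⁴ → ℂ be the quadratic form q(z) = z₀² + z₁² + z₂² − z₃², and let Q = {[z] ∈ ℂP³ : q(z) = 0} be the corresponding projective quadric surface. Then every projective line contained in Q contains a real point, i.e., for every 2-dimensional ℂ-linear subspace W of ℂ⁴ on which q vanishes identically, there exists a nonzero vector w ∈ W that is a ℂ-scalar multiple of a vector with all four coordinates real. -/

import Mathlib

/-- The quadratic form `q(z) = z₀² + z₁² + z₂² − z₃²` on `ℂ⁴`. -/
noncomputable def q (z : Fin 4 → ℂ) : ℂ := z 0 ^ 2 + z 1 ^ 2 + z 2 ^ 2 - z 3 ^ 2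

open Module

lemma qR_nonneg (x y : Fin 4 → ℝ)
    (h1 : x 0 ^ 2 + x 1 ^ 2 + x 2 ^ 2 - x 3 ^ 2 = y 0 ^ 2 + y 1 ^ 2 + y 2 ^ 2 - y 3 ^ 2)
    (h2 : x 0 * y 0 + x 1 * y 1 + x 2 * y 2 - x 3 * y 3 = 0) :
    0 ≤ x 0 ^ 2 + x 1 ^ 2 + x 2 ^ 2 - x 3 ^ 2 := by
  rcases eq_or_ne (x 3 ^ 2 + y 3 ^ 2) 0 with h | h
  · have hx3 : x 3 = 0 := by nlinarith [sq_nonneg (x 3), sq_nonneg (y 3)]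
    nlinarith [sq_nonneg (x 0), sq_nonneg (x 1), sq_nonneg (x 2)]
  · have hpos : 0 < x 3 ^ 2 + y 3 ^ 2 := lt_of_le_of_ne (by positivity) (Ne.symm h)
    have key : (x 3 ^ 2 + y 3 ^ 2) * (x 0 ^ 2 + x 1 ^ 2 + x 2 ^ 2 - x 3 ^ 2) =
        (y 3 * x 0 - x 3 * y 0) ^ 2 + (y 3 * x 1 - x 3 * y 1) ^ 2
          + (y 3 * x 2 - x 3 * y 2) ^ 2 := by
      linear_combination (x 3) ^ 2 * h1 + 2 * x 3 * y 3 * h2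
    nlinarith [sq_nonneg (y 3 * x 0 - x 3 * y 0), sq_nonneg (y 3 * x 1 - x 3 * y 1),
      sq_nonneg (y 3 * x 2 - x 3 * y 2), key, hpos]

lemma hre_nonneg (v : Fin 4 → ℂ) (hv : q v = 0) :
    0 ≤ ((v 0).re ^ 2 + (v 0).im ^ 2) + ((v 1).re ^ 2 + (v 1).im ^ 2)
      + ((v 2).re ^ 2 + (v 2).im ^ 2) - ((v 3).re ^ 2 + (v 3).im ^ 2) := by
  have hre := congrArg Complex.re hv
  have him := congrArg Complex.im hv
  simp only [q, Complex.add_re, Complex.sub_re, Complex.add_im, Complex.sub_im,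
    pow_two, Complex.mul_re, Complex.mul_im, Complex.zero_re, Complex.zero_im] at hre him
  set x : Fin 4 → ℝ := fun i => (v i).re with hx
  set y : Fin 4 → ℝ := fun i => (v i).im with hy
  have h1 : x 0 ^ 2 + x 1 ^ 2 + x 2 ^ 2 - x 3 ^ 2 = y 0 ^ 2 + y 1 ^ 2 + y 2 ^ 2 - y 3 ^ 2 := by
    simp only [hx, hy]; nlinarith [hre]
  have h2 : x 0 * y 0 + x 1 * y 1 + x 2 * y 2 - x 3 * y 3 = 0 := by
    simp only [hx, hy]; nlinarith [him]
  have := qR_nonneg x y h1 h2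
  simp only [hx, hy] at this h1 ⊢
  nlinarith [this, h1]

/-- Every projective line contained in the quadric `Q = {q = 0} ⊆ ℂP³` contains a real
point: for every 2-dimensional ℂ-linear subspace `W` of `ℂ⁴` on which `q` vanishes
identically, there is a nonzero `w ∈ W` which is a ℂ-scalar multiple of a vector with
all four coordinates real. -/
theorem every_line_of_quadric_has_real_point
    (W : Submodule ℂ (Fin 4 → ℂ))
    (hW : Module.finrank ℂ W = 2)
    (hiso : ∀ w ∈ W, q w = 0) :
    ∃ w ∈ W, w ≠ 0 ∧ ∃ (c : ℂ) (x : Fin 4 → ℝ), w = c • (fun i => (x i : ℂ)) := by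
  classical
  let C : (Fin 4 → ℂ) ≃ₗ[ℝ] (Fin 4 → ℂ) :=
    LinearEquiv.piCongrRight fun _ => Complex.conjLIE.toLinearEquiv
  have hC : ∀ u : Fin 4 → ℂ, ∀ i, C u i = (starRingEnd ℂ) (u i) := fun u i => rfl
  let V : Submodule ℝ (Fin 4 → ℂ) := W.restrictScalars ℝ
  by_cases hbot : V ⊓ V.map C.toLinearMap = ⊥
  · exfalso
    have hVW : finrank ℝ V = 4 := by
      have h := Module.finrank_mul_finrank ℝ ℂ W
      have h2 : finrank ℝ W = 4 := by
        rw [← h, hW, Complex.finrank_real_complex]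
      exact h2
    have hVmap : finrank ℝ (V.map C.toLinearMap) = 4 := by
      rw [LinearEquiv.finrank_map_eq C V, hVW]
    have htotal : finrank ℝ (Fin 4 → ℂ) = 8 := by
      rw [Module.finrank_pi_fintype ℝ]
      simp [Complex.finrank_real_complex]
    have hsup : V ⊔ V.map C.toLinearMap = ⊤ := by
      apply Submodule.eq_top_of_finrank_eq
      have h := Submodule.finrank_sup_add_finrank_inf_eq V (V.map C.toLinearMap)
      rw [hbot, finrank_bot, hVW, hVmap] at h
      rw [htotal]; omega
    -- decompose e₃
    have he3 : (fun i => if i = 3 then (1 : ℂ) else 0) ∈ V ⊔ V.map C.toLinearMap := by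
      rw [hsup]; trivial
    obtain ⟨v, hv, y, hy, hvy⟩ := Submodule.mem_sup.1 he3
    obtain ⟨w, hw, rfl⟩ := hy
    have hvW : v ∈ W := hv
    have hwW : w ∈ W := hw
    -- the bilinear form vanishes on W
    have hB : v 0 * w 0 + v 1 * w 1 + v 2 * w 2 - v 3 * w 3 = 0 := by
      have h1 := hiso v hvW; have h2 := hiso w hwW
      have h3 := hiso _ (W.add_mem hvW hwW)
      simp only [q, Pi.add_apply] at h1 h2 h3
      linear_combination (h3 - h1 - h2) / 2
    -- coordinates of the decomposition
    have h0 : v 0 = -(starRingEnd ℂ) (w 0) := by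
      have := congrFun hvy 0; simp only [Pi.add_apply, hC] at this
      simpa [eq_neg_iff_add_eq_zero, hC] using this
    have h1 : v 1 = -(starRingEnd ℂ) (w 1) := by
      have := congrFun hvy 1; simp only [Pi.add_apply, hC] at this
      simpa [eq_neg_iff_add_eq_zero, hC] using this
    have h2 : v 2 = -(starRingEnd ℂ) (w 2) := by
      have := congrFun hvy 2; simp only [Pi.add_apply, hC] at this
      simpa [eq_neg_iff_add_eq_zero, hC] using this
    have h3 : v 3 = 1 - (starRingEnd ℂ) (w 3) := by
      have : v 3 + (starRingEnd ℂ) (w 3) = 1 := by simpa [hC] using congrFun hvy 3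
      linear_combination this
    have hvpos := hre_nonneg v (hiso v hvW)
    have hwpos := hre_nonneg w (hiso w hwW)
    have hBre := congrArg Complex.re hB
    rw [h0, h1, h2, h3] at hvpos hBre
    simp only [Complex.add_re, Complex.sub_re, Complex.neg_re, Complex.neg_im,
      Complex.sub_im, Complex.mul_re, Complex.mul_im, Complex.conj_re, Complex.conj_im,
      Complex.one_re, Complex.one_im, Complex.zero_re] at hvpos hBre
    nlinarith [hvpos, hwpos, hBre]
  · -- W meets its conjugate: produce a real point
    obtain ⟨v, hv, hvne⟩ := Submodule.ne_bot_iff _ |>.1 hbot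
    have hvW : v ∈ W := (Submodule.mem_inf.1 hv).1
    obtain ⟨u, huV, huv⟩ := (Submodule.mem_inf.1 hv).2
    have hCvW : (fun i => (starRingEnd ℂ) (v i)) ∈ W := by
      have : (fun i => (starRingEnd ℂ) (v i)) = u := by
        funext i
        rw [← huv]
        simp [hC]
      rw [this]; exact huV
    by_cases hre0 : ∀ i, (v i).re = 0
    · refine ⟨v, hvW, hvne, Complex.I, fun i => (v i).im, ?_⟩
      funext i
      simp only [Pi.smul_apply, smul_eq_mul]
      apply Complex.ext <;> simp [hre0 i]
    · push_neg at hre0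
      obtain ⟨j, hj⟩ := hre0
      refine ⟨v + fun i => (starRingEnd ℂ) (v i), W.add_mem hvW hCvW, ?_, 1,
        fun i => 2 * (v i).re, ?_⟩
      · intro hzero
        have := congrFun hzero j
        simp only [Pi.add_apply, Pi.zero_apply] at this
        have : (v j + (starRingEnd ℂ) (v j)).re = 0 := by rw [this]; simp
        simp [Complex.add_re, Complex.conj_re] at this
        exact hj (by linarith)
      · funext i
        simp only [Pi.add_apply, Pi.smul_apply, smul_eq_mul, one_mul]
        apply Complex.ext <;> simp [Complex.add_re, Complex.add_im] <;> ring
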